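/- Let (ν_n)_{n∈ℕ} be probability measures on (0,∞) converging weakly to a probability measure ν_∞ on (0,∞), and let (λ_n)_{n∈ℕ} be positive reals converging to λ_∞ > 0. Then the set of u > 0 for which ℛ_{λ_n ν_n}(u) does not converge to ℛ_{λ_∞ ν_∞}(u) is at most countable; in particular ℛ_{λ_n ν_n} converges to ℛ_{λ_∞ ν_∞} Lebesgue-almost everywhere on (0,∞). -/

import Mathlib

open MeasureTheory Set Filter

/-- `ℛ_ν(u) = sup{r > 0 : ν([r,∞)) ≥ u}`, with the convention `sup ∅ = 0` (built into
`Real.sSup`), for a (finite) measure `ν` on `(0,∞)` encoded as a measure on ℝ giving no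
mass to `(-∞,0]`. -/
noncomputable def Rnu (μ : MeasureTheory.Measure ℝ) (u : ℝ) : ℝ :=
  sSup {r : ℝ | 0 < r ∧ u ≤ (μ (Set.Ici r)).toReal}

/-- Let (ν_n) be probability measures on (0,∞) converging weakly to a
probability measure ν_∞ on (0,∞), and let (λ_n) be positive reals converging to λ_∞ > 0.
Then the set of u > 0 for which ℛ_{λ_n ν_n}(u) does not converge to ℛ_{λ_∞ ν_∞}(u) is at
most countable; in particular ℛ_{λ_n ν_n} → ℛ_{λ_∞ ν_∞} Lebesgue-a.e. on (0,∞). -/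

noncomputable def tailR (l : ℝ) (μ : Measure ℝ) (r : ℝ) : ℝ := l * (μ (Ici r)).toReal

noncomputable def Gfun (l : ℝ) (μ : Measure ℝ) (u : ℝ) : ℝ :=
  sSup {r : ℝ | 0 < r ∧ u ≤ tailR l μ r}

lemma tailR_anti (l : ℝ) (hl : 0 ≤ l) (μ : Measure ℝ) [IsFiniteMeasure μ] :
    Antitone (tailR l μ) := fun _ _ h =>
  mul_le_mul_of_nonneg_left
    (ENNReal.toReal_mono (measure_ne_top μ _) (measure_mono (Ici_subset_Ici.2 h))) hl

lemma tailR_tendsto_zero (l : ℝ) (μ : Measure ℝ) [IsFiniteMeasure μ] :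
    Tendsto (tailR l μ) atTop (nhds 0) := by
  have h1 : Tendsto (fun r : ℝ => μ (Ici r)) atTop (nhds (μ (⋂ r : ℝ, Ici r))) :=
    tendsto_measure_iInter_atTop (fun r => measurableSet_Ici.nullMeasurableSet)
      (fun r r' h => Ici_subset_Ici.2 h) ⟨0, measure_ne_top μ _⟩
  have h2 : (⋂ r : ℝ, Ici r) = ∅ := by
    ext x
    simp only [mem_iInter, mem_Ici, mem_empty_iff_false, iff_false, not_forall, not_le]
    exact ⟨x + 1, by linarith⟩
  rw [h2, measure_empty] at h1
  have h3 : Tendsto (fun r : ℝ => (μ (Ici r)).toReal) atTop (nhds 0) := by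
    simpa [Function.comp_def] using (ENNReal.tendsto_toReal (by simp)).comp h1
  have h4 := h3.const_mul l
  rw [mul_zero] at h4
  exact h4

lemma bddAbove_tail_set (l : ℝ) (hl : 0 ≤ l) (μ : Measure ℝ) [IsFiniteMeasure μ]
    (u : ℝ) (hu : 0 < u) : BddAbove {r : ℝ | 0 < r ∧ u ≤ tailR l μ r} := by
  obtain ⟨R, hR⟩ := ((tailR_tendsto_zero l μ).eventually_lt_const hu).exists_forall_of_atTop
  refine ⟨R, fun s hs => ?_⟩
  by_contra hRs
  push_neg at hRs
  exact absurd (hs.2.trans (tailR_anti l hl μ hRs.le)) (not_le.2 (hR R le_rfl))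

lemma tailR_left_cont (l : ℝ) (μ : Measure ℝ) [IsFiniteMeasure μ] (r u : ℝ) (hr : 0 < r)
    (h : ∀ r', 0 < r' → r' < r → u ≤ tailR l μ r') : u ≤ tailR l μ r := by
  have h1 : Tendsto (fun n : ℕ => μ (Ici (r - 1 / (n + 1))))
      atTop (nhds (μ (⋂ n : ℕ, Ici (r - 1 / (n + 1))))) :=
    tendsto_measure_iInter_atTop (fun n => measurableSet_Ici.nullMeasurableSet)
      (fun n m hnm => Ici_subset_Ici.2 (by
        have : (1 : ℝ) / (m + 1) ≤ 1 / (n + 1) := by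
          apply one_div_le_one_div_of_le (by positivity)
          have : (n:ℝ) ≤ m := Nat.cast_le.mpr hnm
          linarith
        linarith)) ⟨0, measure_ne_top μ _⟩
  have h2 : (⋂ n : ℕ, Ici (r - 1 / (n + 1))) = Ici r := by
    ext x
    simp only [mem_iInter, mem_Ici]
    constructor
    · intro hx
      by_contra hxr
      push_neg at hxr
      obtain ⟨n, hn⟩ := exists_nat_one_div_lt (show (0:ℝ) < r - x by linarith)
      have := hx n
      linarith
    · intro hx n
      have : (0:ℝ) < 1 / (n + 1) := by positivity
      linarith
  rw [h2] at h1
  have h3 : Tendsto (fun n : ℕ => tailR l μ (r - 1 / (n + 1))) atTop (nhds (tailR l μ r)) :=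
    ((ENNReal.tendsto_toReal (measure_ne_top μ _)).comp h1).const_mul l
  refine ge_of_tendsto h3 ?_
  have hpos : ∀ᶠ n : ℕ in atTop, 1 / ((n : ℝ) + 1) < r :=
    tendsto_one_div_add_atTop_nhds_zero_nat.eventually_lt_const hr
  filter_upwards [hpos] with n hn
  refine h _ (by linarith) ?_
  have : (0:ℝ) < 1 / ((n:ℝ) + 1) := by positivity
  linarith

lemma galois (l : ℝ) (hl : 0 < l) (μ : Measure ℝ) [IsFiniteMeasure μ] {u r : ℝ}
    (hu : 0 < u) (hr : 0 < r) :
    u ≤ tailR l μ r ↔ r ≤ Gfun l μ u := by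
  constructor
  · intro h
    exact le_csSup (bddAbove_tail_set l hl.le μ u hu) ⟨hr, h⟩
  · intro h
    rcases eq_empty_or_nonempty {r' : ℝ | 0 < r' ∧ u ≤ tailR l μ r'} with he | hne
    · exfalso
      rw [Gfun, he, Real.sSup_empty] at h
      linarith
    · refine tailR_left_cont l μ r u hr fun r' hr'0 hr'r => ?_
      obtain ⟨s, hs, hr's⟩ := exists_lt_of_lt_csSup hne (lt_of_lt_of_le hr'r h)
      exact hs.2.trans (tailR_anti l hl.le μ hr's.le)

lemma Gfun_pos (l : ℝ) (μ : Measure ℝ) [IsProbabilityMeasure μ] (hμ : μ (Iic 0) = 0)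
    {u : ℝ} (hu : 0 < u) (hul : u < l) : 0 < Gfun l μ u := by
  have hl : 0 < l := hu.trans hul
  have h1 : Tendsto (fun n : ℕ => μ (Ici (1 / (n + 1))))
      atTop (nhds (μ (⋃ n : ℕ, Ici (1 / ((n:ℝ) + 1))))) :=
    tendsto_measure_iUnion_atTop (fun n m hnm => Ici_subset_Ici.2 (by
      apply one_div_le_one_div_of_le (by positivity)
      have : (n:ℝ) ≤ m := Nat.cast_le.mpr hnm
      linarith))
  have h2 : (⋃ n : ℕ, Ici (1 / ((n:ℝ) + 1))) = Ioi 0 := by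
    ext x
    simp only [mem_iUnion, mem_Ici, mem_Ioi]
    constructor
    · rintro ⟨n, hn⟩
      have : (0:ℝ) < 1 / (n + 1) := by positivity
      linarith
    · intro hx
      obtain ⟨n, hn⟩ := exists_nat_one_div_lt hx
      exact ⟨n, hn.le⟩
  have h3 : μ (Ioi 0) = 1 := by
    rw [← compl_Iic, measure_compl measurableSet_Iic (measure_ne_top μ _), hμ, measure_univ]
    simp
  rw [h2, h3] at h1
  have h4 : Tendsto (fun n : ℕ => tailR l μ (1 / ((n:ℝ) + 1))) atTop (nhds l) := by
    have := ((ENNReal.tendsto_toReal (by simp)).comp h1).const_mul l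
    simpa [tailR] using this
  obtain ⟨n, hn⟩ := (h4.eventually_const_lt hul).exists
  have hrpos : (0:ℝ) < 1 / ((n:ℝ) + 1) := by positivity
  calc (0:ℝ) < 1 / ((n:ℝ) + 1) := hrpos
    _ ≤ Gfun l μ u := le_csSup (bddAbove_tail_set l hl.le μ u hu) ⟨hrpos, hn.le⟩

lemma Gfun_zero (l : ℝ) (hl : 0 ≤ l) (μ : Measure ℝ) [IsProbabilityMeasure μ]
    {u : ℝ} (hlu : l < u) : Gfun l μ u = 0 := by
  have he : {r : ℝ | 0 < r ∧ u ≤ tailR l μ r} = ∅ := by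
    ext r
    simp only [mem_setOf_eq, mem_empty_iff_false, iff_false, not_and, not_le]
    intro _
    have h1 : (μ (Ici r)).toReal ≤ 1 := by
      have h2 := prob_le_one (μ := μ) (s := Ici r)
      have h3 := ENNReal.toReal_mono (by simp : (1:ENNReal) ≠ ⊤) h2
      simpa using h3
    show l * (μ (Ici r)).toReal < u
    nlinarith [mul_le_mul_of_nonneg_left h1 hl]
  rw [Gfun, he, Real.sSup_empty]



lemma tail_conv (ν : ℕ → Measure ℝ) (νinf : Measure ℝ)
    (hprob : ∀ n, IsProbabilityMeasure (ν n)) (hprobinf : IsProbabilityMeasure νinf)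
    (lam : ℕ → ℝ) (laminf : ℝ) (hlamconv : Tendsto lam atTop (nhds laminf))
    (hweak : ∀ f : BoundedContinuousFunction ℝ ℝ,
      Tendsto (fun n => ∫ u, f u ∂(ν n)) atTop (nhds (∫ u, f u ∂νinf)))
    (r : ℝ) (hatom : νinf {r} = 0) :
    Tendsto (fun n => tailR (lam n) (ν n) r) atTop (nhds (tailR laminf νinf r)) := by
  haveI := hprobinf
  set P : ℕ → ProbabilityMeasure ℝ := fun n => ⟨ν n, hprob n⟩ with hP
  set Pinf : ProbabilityMeasure ℝ := ⟨νinf, hprobinf⟩ with hPinf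
  have hconv : Tendsto P atTop (nhds Pinf) :=
    ProbabilityMeasure.tendsto_iff_forall_integral_tendsto.mpr fun f => hweak f
  have hbdry : (Pinf : Measure ℝ) (frontier (Ici r)) = 0 := by
    rw [frontier_Ici]
    exact hatom
  have hkey := ProbabilityMeasure.tendsto_measure_of_null_frontier_of_tendsto' hconv hbdry
  have h2 : Tendsto (fun n => (ν n (Ici r)).toReal) atTop (nhds ((νinf (Ici r)).toReal)) :=
    (ENNReal.tendsto_toReal (measure_ne_top _ _)).comp hkey
  exact hlamconv.mul h2

lemma exists_nonatom (μ : Measure ℝ) [IsFiniteMeasure μ] {a b : ℝ} (hab : a < b) :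
    ∃ r, a < r ∧ r < b ∧ μ {r} = 0 := by
  by_contra h
  push_neg at h
  have hsub : Ioo a b ⊆ {x : ℝ | 0 < μ {x}} := fun r hr =>
    pos_iff_ne_zero.mpr (h r hr.1 hr.2)
  have hc : {x : ℝ | 0 < μ {x}}.Countable :=
    Measure.countable_meas_pos_of_disjoint_of_meas_iUnion_ne_top μ
      (fun i => measurableSet_singleton i)
      (fun i j hij => by simpa using hij) (measure_ne_top μ _)
  have h0 : volume (Ioo a b) = 0 :=
    measure_mono_null hsub (hc.measure_zero volume)
  rw [Real.volume_Ioo] at h0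
  simp only [ENNReal.ofReal_eq_zero] at h0
  linarith

lemma countable_bad (G : ℝ → ℝ) :
    {u : ℝ | ∃ ε > 0, ∀ u' > u, G u' ≤ G u - ε}.Countable := by
  set B := {u : ℝ | ∃ ε > 0, ∀ u' > u, G u' ≤ G u - ε} with hB
  have hex : ∀ u : ↥B, ∃ q : ℚ, (∀ u' > (u : ℝ), G u' ≤ (q : ℝ)) ∧ (q : ℝ) < G u := by
    rintro ⟨u, ε, hε, h⟩
    obtain ⟨q, hq1, hq2⟩ := exists_rat_btwn (show G u - ε < G u by linarith)
    exact ⟨q, fun u' hu' => (h u' hu').trans hq1.le, hq2⟩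
  choose f hf1 hf2 using hex
  have hmono : ∀ a b : ↥B, (a : ℝ) < b → (f b : ℝ) < f a :=
    fun a b hab => lt_of_lt_of_le (hf2 b) (hf1 a b hab)
  have hinj : Function.Injective f := by
    intro a b hab
    rcases lt_trichotomy (a : ℝ) (b : ℝ) with h | h | h
    · exact absurd (hmono a b h) (by rw [hab]; exact lt_irrefl _)
    · exact Subtype.ext h
    · exact absurd (hmono b a h) (by rw [hab]; exact lt_irrefl _)
  have : Countable ↥B := hinj.countable
  exact Set.countable_coe_iff.mp this

lemma key_tendsto (ν : ℕ → Measure ℝ) (νinf : Measure ℝ)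
    (hprob : ∀ n, IsProbabilityMeasure (ν n)) (hprobinf : IsProbabilityMeasure νinf)
    (hsuppinf : νinf (Iic 0) = 0)
    (lam : ℕ → ℝ) (laminf : ℝ) (hlam : ∀ n, 0 < lam n) (hlaminf : 0 < laminf)
    (hlamconv : Tendsto lam atTop (nhds laminf))
    (htail : ∀ r : ℝ, νinf {r} = 0 →
      Tendsto (fun n => tailR (lam n) (ν n) r) atTop (nhds (tailR laminf νinf r)))
    (u : ℝ) (hu : 0 < u) (hne : u ≠ laminf)
    (hrc : ∀ ε > 0, ∃ u' > u, Gfun laminf νinf u - ε < Gfun laminf νinf u') :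
    Tendsto (fun n => Gfun (lam n) (ν n) u) atTop (nhds (Gfun laminf νinf u)) := by
  haveI := hprobinf
  haveI := fun n => hprob n
  rcases hne.lt_or_gt with hul | hlu
  · -- u < laminf : the interesting case
    have hx : 0 < Gfun laminf νinf u := Gfun_pos laminf νinf hsuppinf hu hul
    rw [tendsto_order]
    constructor
    · intro a ha
      -- find u' > u with Gfun laminf νinf u' > max a 0
      have hstep : ∃ u', u < u' ∧ max a 0 < Gfun laminf νinf u' := by
        rcases le_or_gt 0 a with h0 | h0
        · obtain ⟨u', hu', hG⟩ := hrc (Gfun laminf νinf u - a) (by linarith)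
          exact ⟨u', hu', by rw [max_eq_left h0]; linarith⟩
        · refine ⟨(u + laminf) / 2, by linarith, ?_⟩
          rw [max_eq_right h0.le]
          exact Gfun_pos laminf νinf hsuppinf (by linarith) (by linarith)
      obtain ⟨u', huu', hG'⟩ := hstep
      obtain ⟨r, hr1, hr2, hratom⟩ := exists_nonatom νinf hG'
      have hrpos : 0 < r := lt_of_le_of_lt (le_max_right a 0) hr1
      have hu'pos : 0 < u' := hu.trans huu'
      have htr : u' ≤ tailR laminf νinf r :=
        (galois laminf hlaminf νinf hu'pos hrpos).mpr hr2.le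
      have hev : ∀ᶠ n in atTop, u < tailR (lam n) (ν n) r :=
        (htail r hratom).eventually_const_lt (lt_of_lt_of_le huu' htr)
      filter_upwards [hev] with n hn
      have : r ≤ Gfun (lam n) (ν n) u :=
        (galois (lam n) (hlam n) (ν n) hu hrpos).mp hn.le
      exact lt_of_lt_of_le (lt_of_le_of_lt (le_max_left a 0) hr1) this
    · intro a ha
      obtain ⟨r, hr1, hr2, hratom⟩ := exists_nonatom νinf ha
      have hrpos : 0 < r := hx.trans hr1
      have htr : tailR laminf νinf r < u := by
        by_contra hcon
        push_neg at hcon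
        have := (galois laminf hlaminf νinf hu hrpos).mp hcon
        linarith
      have hev : ∀ᶠ n in atTop, tailR (lam n) (ν n) r < u :=
        (htail r hratom).eventually_lt_const htr
      filter_upwards [hev] with n hn
      by_contra hcon
      push_neg at hcon
      have : u ≤ tailR (lam n) (ν n) r :=
        (galois (lam n) (hlam n) (ν n) hu hrpos).mpr (le_trans hr2.le hcon)
      linarith
  · -- laminf < u : everything is eventually 0
    have h0 : Gfun laminf νinf u = 0 := Gfun_zero laminf hlaminf.le νinf hlu
    rw [h0]
    have hev : ∀ᶠ n in atTop, Gfun (lam n) (ν n) u = 0 := by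
      filter_upwards [hlamconv.eventually_lt_const hlu] with n hn
      exact Gfun_zero (lam n) (hlam n).le (ν n) hn
    exact Tendsto.congr' (by filter_upwards [hev] with n hn; exact hn.symm) tendsto_const_nhds

lemma Rnu_smul_eq (l : ℝ) (hl : 0 ≤ l) (μ : Measure ℝ) (u : ℝ) :
    Rnu (ENNReal.ofReal l • μ) u = Gfun l μ u := by
  unfold Rnu Gfun tailR
  congr 2
  ext r
  simp [Measure.smul_apply, smul_eq_mul, ENNReal.toReal_mul, ENNReal.toReal_ofReal hl]


theorem stmt18 (ν : ℕ → Measure ℝ) (νinf : Measure ℝ)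
    (hprob : ∀ n, IsProbabilityMeasure (ν n)) (hprobinf : IsProbabilityMeasure νinf)
    (hsupp : ∀ n, ν n (Iic 0) = 0) (hsuppinf : νinf (Iic 0) = 0)
    (lam : ℕ → ℝ) (laminf : ℝ) (hlam : ∀ n, 0 < lam n) (hlaminf : 0 < laminf)
    (hlamconv : Tendsto lam atTop (nhds laminf))
    (hweak : ∀ f : BoundedContinuousFunction ℝ ℝ,
      Tendsto (fun n => ∫ u, f u ∂(ν n)) atTop (nhds (∫ u, f u ∂νinf))) :
    {u : ℝ | 0 < u ∧ ¬ Tendsto (fun n => Rnu (ENNReal.ofReal (lam n) • ν n) u)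
        atTop (nhds (Rnu (ENNReal.ofReal laminf • νinf) u))}.Countable ∧
    (∀ᵐ u ∂(volume.restrict (Ioi (0:ℝ))),
      Tendsto (fun n => Rnu (ENNReal.ofReal (lam n) • ν n) u)
        atTop (nhds (Rnu (ENNReal.ofReal laminf • νinf) u))) := by
  have htail := tail_conv ν νinf hprob hprobinf lam laminf hlamconv hweak
  set Bad : Set ℝ := {laminf} ∪
      {u : ℝ | ∃ ε > 0, ∀ u' > u, Gfun laminf νinf u' ≤ Gfun laminf νinf u - ε} with hBad
  have hBadc : Bad.Countable := (countable_singleton _).union (countable_bad _)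
  have hkey : ∀ u : ℝ, 0 < u → u ∉ Bad →
      Tendsto (fun n => Rnu (ENNReal.ofReal (lam n) • ν n) u)
        atTop (nhds (Rnu (ENNReal.ofReal laminf • νinf) u)) := by
    intro u hu hub
    have h1 : u ≠ laminf := fun h => hub (Or.inl h)
    have h2 : ∀ ε > 0, ∃ u' > u, Gfun laminf νinf u - ε < Gfun laminf νinf u' := by
      have h3 : u ∉ {u : ℝ | ∃ ε > 0, ∀ u' > u,
          Gfun laminf νinf u' ≤ Gfun laminf νinf u - ε} := fun h => hub (Or.inr h)
      simp only [mem_setOf_eq] at h3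
      push_neg at h3
      exact h3
    have := key_tendsto ν νinf hprob hprobinf hsuppinf lam laminf hlam hlaminf hlamconv
      htail u hu h1 h2
    simpa only [fun n => Rnu_smul_eq (lam n) (hlam n).le (ν n) u,
      Rnu_smul_eq laminf hlaminf.le νinf u] using this
  constructor
  · refine hBadc.mono ?_
    rintro u ⟨hu, hnt⟩
    by_contra hub
    exact hnt (hkey u hu hub)
  · rw [ae_iff, Measure.restrict_apply' measurableSet_Ioi]
    refine measure_mono_null ?_ (hBadc.measure_zero volume)
    rintro u ⟨hnt, hu⟩
    by_contra hub
    exact hnt (hkey u hu hub)
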